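/- arXiv:2205.03965 — 2 statements merged into one kernel-verified Lean document; each statement's English description precedes it below -/
import Mathlib

section
/- Let n be a positive integer and let G be a connected graph with at most 4n−2 edges such that G → (nK₂, C₃). Suppose that for every positive integer k, every connected graph G′ with strictly fewer vertices than G and at most 4k−2 edges satisfies G′ ↛ (kK₂, C₃). Then the minimum degree of G is at least two. -/
open SimpleGraph

/-- `G` contains a copy of `H`, i.e. there is an injective graph homomorphism from `H` to `G`. -/
def ContainsCopy {V W : Type*} (G : SimpleGraph V) (H : SimpleGraph W) : Prop :=
  ∃ f : H →g G, Function.Injective f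

/-- `G` arrows `(G₁, G₂)`: for every red/blue colouring of the edges of `G`
(given by a subgraph `R ≤ G` of red edges, the blue edges being `G \ R`),
there is a red copy of `G₁` or a blue copy of `G₂`. -/
def Arrows {V V₁ V₂ : Type*} (G : SimpleGraph V) (G₁ : SimpleGraph V₁) (G₂ : SimpleGraph V₂) :
    Prop :=
  ∀ R : SimpleGraph V, R ≤ G → ContainsCopy R G₁ ∨ ContainsCopy (G \ R) G₂

/-- The matching `nK₂` with `n` edges. -/
def Matching (n : ℕ) : SimpleGraph (Fin n × Fin 2) where
  Adj a b := a.1 = b.1 ∧ a.2 ≠ b.2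
  symm := by constructor; intro a b h; exact ⟨h.1.symm, h.2.symm⟩
  loopless := by constructor; intro a h; exact h.2 rfl

/-- `n` disjoint copies of the graph `H`. -/
def Copies (n : ℕ) {W : Type*} (H : SimpleGraph W) : SimpleGraph (Fin n × W) where
  Adj a b := a.1 = b.1 ∧ H.Adj a.2 b.2
  symm := by constructor; intro a b h; exact ⟨h.1.symm, h.2.symm⟩
  loopless := by constructor; intro a h; exact H.irrefl h.2

/-- Disjoint union of two graphs. -/
def DisjUnion {V W : Type*} (G : SimpleGraph V) (H : SimpleGraph W) : SimpleGraph (V ⊕ W) where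
  Adj a b :=
    match a, b with
    | Sum.inl x, Sum.inl y => G.Adj x y
    | Sum.inr x, Sum.inr y => H.Adj x y
    | _, _ => False
  symm := by
    constructor
    rintro (x | x) (y | y) h
    · exact G.adj_symm h
    · exact h.elim
    · exact h.elim
    · exact H.adj_symm h
  loopless := by
    constructor
    rintro (x | x) h
    · exact G.irrefl h
    · exact H.irrefl h

section MinDegHelpers

variable {V : Type} {G : SimpleGraph V}

private lemma reach_aux {v u : V} (hu : G.neighborSet v = {u}) :
    ∀ (L : ℕ) (a b : V) (ha : a ≠ v) (hb : b ≠ v) (w : G.Walk a b), w.length ≤ L →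
      (G.induce {w | w ≠ v}).Reachable ⟨a, ha⟩ ⟨b, hb⟩ := by
  intro L
  induction L with
  | zero =>
    intro a b ha hb w hw
    cases w with
    | nil => exact Reachable.refl _
    | cons h p => simp [SimpleGraph.Walk.length_cons] at hw
  | succ L ih =>
    intro a b ha hb w hw
    cases w with
    | nil => exact Reachable.refl _
    | @cons _ c _ h p =>
      by_cases hc : c = v
      · have hau : a = u := by
          have : a ∈ G.neighborSet v := hc ▸ h.symm
          rwa [hu, Set.mem_singleton_iff] at this
        cases p with
        | nil => exact absurd hc hb
        | @cons _ d _ h2 q =>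
          have hd : d = u := by
            have : d ∈ G.neighborSet v := hc ▸ h2
            rwa [hu, Set.mem_singleton_iff] at this
          refine ih a b ha hb (q.copy (hd.trans hau.symm) rfl) ?_
          rw [SimpleGraph.Walk.length_copy]
          simp only [SimpleGraph.Walk.length_cons] at hw
          omega
      · have hadj : (G.induce {w | w ≠ v}).Adj ⟨a, ha⟩ ⟨c, hc⟩ := h
        refine hadj.reachable.trans (ih c b hc hb p ?_)
        simp only [SimpleGraph.Walk.length_cons] at hw
        omega

end MinDegHelpers

/-- If `G` is a connected graph with at most `4n−2` edges arrowing
`(nK₂, C₃)`, and for every positive `k` every connected graph with strictly fewer vertices than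
`G` and at most `4k−2` edges does not arrow `(kK₂, C₃)`, then the minimum degree of `G` is at
least two. -/
theorem min_degree_ge_two (n : ℕ) (hn : 0 < n) (V : Type) [Finite V]
    (G : SimpleGraph V) (hconn : G.Connected) (hE : G.edgeSet.ncard ≤ 4 * n - 2)
    (harrow : Arrows G (Matching n) (cycleGraph 3))
    (hmin : ∀ k : ℕ, 0 < k → ∀ (W : Type), Finite W → ∀ H : SimpleGraph W,
      H.Connected → Nat.card W < Nat.card V → H.edgeSet.ncard ≤ 4 * k - 2 →
      ¬ Arrows H (Matching k) (cycleGraph 3)) :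
    ∀ v : V, 2 ≤ (G.neighborSet v).ncard := by
  intro v
  by_contra hdeg
  push_neg at hdeg
  -- `G` has an edge
  have hedge : ∃ x y, G.Adj x y := by
    rcases harrow G le_rfl with hred | hblue
    · obtain ⟨f, hf⟩ := hred
      refine ⟨f (⟨0, hn⟩, 0), f (⟨0, hn⟩, 1), f.map_adj ?_⟩
      exact show (Matching n).Adj (⟨0, hn⟩, 0) (⟨0, hn⟩, 1) from ⟨rfl, Fin.zero_ne_one⟩
    · obtain ⟨f, hf⟩ := hblue
      have h01 : (cycleGraph 3).Adj 0 1 := by decide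
      have := f.map_adj h01
      rw [sdiff_adj] at this
      exact absurd this.1 this.2
  -- `v` has a neighbor
  have hnb : ∃ u, G.Adj v u := by
    obtain ⟨x, y, hxy⟩ := hedge
    by_cases hvx : v = x
    · exact ⟨y, hvx ▸ hxy⟩
    · obtain ⟨w⟩ := hconn v x
      exact ⟨w.getVert 1, w.adj_snd (SimpleGraph.Walk.not_nil_of_ne hvx)⟩
  obtain ⟨u, hvu⟩ := hnb
  have hne : (G.neighborSet v).Nonempty := ⟨u, hvu⟩
  have h1 : (G.neighborSet v).ncard = 1 := by
    have := (Set.ncard_pos (Set.toFinite _)).mpr hne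
    omega
  obtain ⟨u', hu⟩ := Set.ncard_eq_one.mp h1
  have huu' : u = u' := by
    have : u ∈ G.neighborSet v := hvu
    rwa [hu, Set.mem_singleton_iff] at this
  subst huu'
  have huv : u ≠ v := fun h => G.loopless.irrefl v (h ▸ hvu)
  set s : Set V := {w | w ≠ v} with hs
  set G' := G.induce s with hG'
  have hconn' : G'.Connected := by
    rw [SimpleGraph.connected_iff]
    refine ⟨?_, ⟨⟨u, huv⟩⟩⟩
    rintro ⟨a, ha⟩ ⟨b, hb⟩
    obtain ⟨w⟩ := hconn a b
    exact reach_aux hu w.length a b ha hb w le_rfl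
  have hcard : Nat.card s < Nat.card V := by
    have h2 : s.ncard < (Set.univ : Set V).ncard := by
      refine Set.ncard_lt_ncard ?_ Set.finite_univ
      rw [Set.ssubset_univ_iff]
      intro hsu
      have : v ∈ s := hsu ▸ Set.mem_univ v
      exact this rfl
    rw [Set.ncard_univ] at h2
    rwa [Nat.card_coe_set_eq]
  have hE' : G'.edgeSet.ncard ≤ 4 * n - 2 := by
    refine le_trans ?_ hE
    refine Set.ncard_le_ncard_of_injOn (Sym2.map Subtype.val) ?_ ?_ (Set.toFinite _)
    · intro e
      refine Sym2.ind (fun x y he => ?_) e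
      exact he
    · exact (Sym2.map.injective Subtype.val_injective).injOn
  have harrow' : Arrows G' (Matching n) (cycleGraph 3) := by
    intro R' hR'
    set ι : s ↪ V := Function.Embedding.subtype _ with hι
    have hle : R'.map ι ≤ G := by
      intro x y hxy
      rw [SimpleGraph.map_adj] at hxy
      obtain ⟨a, b, hab, rfl, rfl⟩ := hxy
      exact hR' hab
    rcases harrow (R'.map ι) hle with hred | hblue
    · left
      obtain ⟨f, hf⟩ := hred
      have hmem : ∀ x : Fin n × Fin 2, f x ∈ s := by
        intro x
        have hadj : (Matching n).Adj x (x.1, ⟨1 - x.2.val, by omega⟩) := by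
          refine ⟨rfl, ?_⟩
          intro hcontra
          have := congrArg Fin.val hcontra
          simp only at this
          omega
        have := f.map_adj hadj
        rw [SimpleGraph.map_adj] at this
        obtain ⟨a, b, hab, ha, hb⟩ := this
        exact ha ▸ a.2
      refine ⟨⟨fun x => ⟨f x, hmem x⟩, ?_⟩, ?_⟩
      · intro x y hxy
        have h2 := f.map_adj hxy
        exact SimpleGraph.map_adj_apply.mp h2
      · intro x y hxy
        exact hf (congrArg Subtype.val hxy)
    · right
      obtain ⟨f, hf⟩ := hblue
      have htri : ∀ x : Fin 3, (cycleGraph 3).Adj x (x + 1) ∧ (cycleGraph 3).Adj x (x + 2)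
          ∧ x + 1 ≠ x + 2 := by decide
      have hmem : ∀ x : Fin 3, f x ∈ s := by
        intro x hx
        have hx : f x = v := hx
        obtain ⟨ha1, ha2, hne12⟩ := htri x
        have hb1 := (f.map_adj ha1)
        have hb2 := (f.map_adj ha2)
        rw [sdiff_adj] at hb1 hb2
        have m1 : f (x + 1) ∈ G.neighborSet v := hx ▸ hb1.1
        have m2 : f (x + 2) ∈ G.neighborSet v := hx ▸ hb2.1
        rw [hu, Set.mem_singleton_iff] at m1 m2
        exact hne12 (hf (m1.trans m2.symm))
      refine ⟨⟨fun x => ⟨f x, hmem x⟩, ?_⟩, ?_⟩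
      · intro x y hxy
        have h2 := f.map_adj hxy
        rw [sdiff_adj] at h2
        rw [sdiff_adj]
        refine ⟨h2.1, fun hr => h2.2 ?_⟩
        exact SimpleGraph.map_adj_apply.mpr hr
      · intro x y hxy
        exact hf (congrArg Subtype.val hxy)
  exact hmin n hn s inferInstance G' hconn' hcard hE' harrow'
end

section
/- Let n be a positive integer and let G be a connected graph with at most 4n−2 edges such that G → (nK₂, C₃). Suppose that for every positive integer k, every connected graph G′ with either fewer vertices than G, or the same number of vertices and fewer edges than G, satisfies G′ ↛ (kK₂, C₃) whenever G′ has at most 4k−2 edges. Then the maximum degree of G is at most three. -/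
open SimpleGraph

namespace Stmt16

variable {V : Type}

def HasM (R : SimpleGraph V) (k : ℕ) : Prop :=
  ∃ p : Fin k × Fin 2 → V, Function.Injective p ∧ ∀ i : Fin k, R.Adj (p (i, 0)) (p (i, 1))

def HasT (B : SimpleGraph V) : Prop :=
  ∃ x y z : V, x ≠ y ∧ x ≠ z ∧ y ≠ z ∧ B.Adj x y ∧ B.Adj x z ∧ B.Adj y z

lemma hasM_iff {R : SimpleGraph V} {k : ℕ} : ContainsCopy R (Matching k) ↔ HasM R k := by
  constructor
  · rintro ⟨f, hf⟩
    exact ⟨fun z => f z, hf, fun i => f.map_adj ⟨rfl, by simp⟩⟩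
  · rintro ⟨p, hinj, hadj⟩
    refine ⟨⟨p, ?_⟩, hinj⟩
    rintro ⟨i, x⟩ ⟨j, y⟩ ⟨h1, h2⟩
    dsimp at h1 h2
    subst h1
    rcases (by decide : ∀ x y : Fin 2, x ≠ y → x = 0 ∧ y = 1 ∨ x = 1 ∧ y = 0) x y h2 with
      ⟨hx, hy⟩ | ⟨hx, hy⟩ <;> subst hx <;> subst hy
    · exact hadj i
    · exact (hadj i).symm

lemma hasT_iff {B : SimpleGraph V} : ContainsCopy B (cycleGraph 3) ↔ HasT B := by
  constructor
  · rintro ⟨f, hf⟩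
    refine ⟨f 0, f 1, f 2, fun h => (by decide : (0 : Fin 3) ≠ 1) (hf h),
      fun h => (by decide : (0 : Fin 3) ≠ 2) (hf h),
      fun h => (by decide : (1 : Fin 3) ≠ 2) (hf h),
      f.map_adj (by decide), f.map_adj (by decide), f.map_adj (by decide)⟩
  · rintro ⟨x, y, z, hxy, hxz, hyz, e1, e2, e3⟩
    refine ⟨⟨![x, y, z], ?_⟩, ?_⟩
    · intro a b hab
      fin_cases a <;> fin_cases b <;>
        first
          | exact absurd hab (by decide)
          | simpa using e1
          | simpa using e2
          | simpa using e3
          | simpa using e1.symm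
          | simpa using e2.symm
          | simpa using e3.symm
    · intro a b hab
      fin_cases a <;> fin_cases b <;> simp_all <;>
        first
          | rfl
          | exact absurd hab hxy
          | exact absurd hab hxz
          | exact absurd hab hyz
          | exact absurd hab.symm hxy
          | exact absurd hab.symm hxz
          | exact absurd hab.symm hyz



def Arr (A : SimpleGraph V) (k : ℕ) : Prop :=
  ∀ R : SimpleGraph V, R ≤ A → HasM R k ∨ HasT (A \ R)

lemma HasM.mono {R : SimpleGraph V} {j k : ℕ} (h : HasM R k) (hjk : j ≤ k) : HasM R j := by
  obtain ⟨p, hinj, hadj⟩ := h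
  exact ⟨fun z => p (Fin.castLE hjk z.1, z.2),
    hinj.comp ((Fin.castLE_injective hjk).prodMap Function.injective_id), fun i => hadj _⟩

lemma hasM_of_finset {Q : SimpleGraph V} {k : ℕ} {p : Fin k × Fin 2 → V}
    (hinj : Function.Injective p) (J : Finset (Fin k))
    (hQ : ∀ j ∈ J, Q.Adj (p (j, 0)) (p (j, 1))) : HasM Q J.card := by
  refine ⟨fun z => p ((J.equivFin.symm z.1 : J).1, z.2), ?_,
    fun i => hQ _ (J.equivFin.symm i).2⟩
  rintro ⟨i, x⟩ ⟨i', x'⟩ h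
  have h2 := hinj h
  rw [Prod.mk.injEq] at h2 ⊢
  exact ⟨J.equivFin.symm.injective (Subtype.coe_injective h2.1), h2.2⟩

lemma arr_zero (A : SimpleGraph V) : Arr A 0 :=
  fun _ _ => Or.inl ⟨fun z => z.1.elim0, fun a _ _ => a.1.elim0, fun i => i.elim0⟩

lemma arr_le [Finite V] {A : SimpleGraph V} {k : ℕ} (h : Arr A k) : k ≤ Nat.card V := by
  rcases h A le_rfl with ⟨p, hinj, _⟩ | ⟨x, y, z, _, _, _, hxy, _, _⟩
  · have h1 := Nat.card_le_card_of_injective p hinj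
    have h2 : Nat.card (Fin k × Fin 2) = k * 2 := by simp
    omega
  · rw [sdiff_adj] at hxy
    exact absurd hxy.1 hxy.2

noncomputable def bArr [Finite V] (A : SimpleGraph V) : ℕ := sSup {k | Arr A k}

lemma bArr_bdd [Finite V] (A : SimpleGraph V) : BddAbove {k | Arr A k} :=
  ⟨Nat.card V, fun _ hk => arr_le hk⟩

lemma bArr_spec [Finite V] (A : SimpleGraph V) : Arr A (bArr A) :=
  Nat.sSup_mem ⟨0, show (0:ℕ) ∈ {k | Arr A k} from arr_zero A⟩ (bArr_bdd A)

lemma bArr_lt [Finite V] (A : SimpleGraph V) : ¬ Arr A (bArr A + 1) := fun h => by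
  have : bArr A + 1 ≤ bArr A := le_csSup (bArr_bdd A) (show bArr A + 1 ∈ {k | Arr A k} from h)
  omega

lemma reach_comap {A : SimpleGraph V} {s : Set V} (hs : ∀ ⦃x y⦄, A.Adj x y → x ∈ s)
    {x y : V} (w : A.Walk x y) :
    ∀ (hx : x ∈ s) (hy : y ∈ s),
      (A.comap (Subtype.val : s → V)).Reachable ⟨x, hx⟩ ⟨y, hy⟩ := by
  induction w with
  | nil => intro hx hy; exact Reachable.refl _
  | @cons a b c h p ih =>
      intro hx hy
      exact (Adj.reachable (by exact h)).trans (ih (hs h.symm) hy)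

lemma comap_connected {A : SimpleGraph V} {s : Set V} (hs : ∀ ⦃x y⦄, A.Adj x y → x ∈ s)
    (hne : s.Nonempty) (hr : ∀ x ∈ s, ∀ y ∈ s, A.Reachable x y) :
    (A.comap (Subtype.val : s → V)).Connected := by
  have : Nonempty s := ⟨⟨hne.choose, hne.choose_spec⟩⟩
  refine ⟨fun a b => ?_⟩
  obtain ⟨w⟩ := hr a a.2 b b.2
  exact reach_comap hs w a.2 b.2

lemma comap_edge_ncard {A : SimpleGraph V} {s : Set V} (hs : ∀ ⦃x y⦄, A.Adj x y → x ∈ s) :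
    (A.comap (Subtype.val : s → V)).edgeSet.ncard = A.edgeSet.ncard := by
  have himg : A.edgeSet = Sym2.map (Subtype.val : s → V) ''
      (A.comap (Subtype.val : s → V)).edgeSet := by
    ext e
    induction e with
    | _ a b =>
      simp only [mem_edgeSet, Set.mem_image]
      constructor
      · intro hab
        exact ⟨s(⟨a, hs hab⟩, ⟨b, hs hab.symm⟩), hab, rfl⟩
      · rintro ⟨e', he', hmap⟩
        induction e' with
        | _ u w =>
          rw [Sym2.map_pair_eq, Sym2.eq_iff] at hmap
          rcases hmap with ⟨h1, h2⟩ | ⟨h1, h2⟩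
          · rw [← h1, ← h2]; exact he'
          · rw [← h1, ← h2]; exact he'.symm
  rw [himg, Set.ncard_image_of_injective _ (Sym2.map.injective Subtype.coe_injective)]

lemma arr_iff {A : SimpleGraph V} {k : ℕ} :
    Arrows A (Matching k) (cycleGraph 3) ↔ Arr A k :=
  forall_congr' fun R => forall_congr' fun _ => or_congr hasM_iff hasT_iff

lemma arrows_comap {A : SimpleGraph V} {s : Set V} (hs : ∀ ⦃x y⦄, A.Adj x y → x ∈ s)
    {k : ℕ} (h : Arr A k) :
    Arrows (A.comap (Subtype.val : s → V)) (Matching k) (cycleGraph 3) := by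
  rw [arr_iff]
  intro R' hR'
  set R : SimpleGraph V :=
    { Adj := fun a b => ∃ (ha : a ∈ s) (hb : b ∈ s), R'.Adj ⟨a, ha⟩ ⟨b, hb⟩
      symm := by constructor; rintro a b ⟨ha, hb, h'⟩; exact ⟨hb, ha, h'.symm⟩
      loopless := by constructor; rintro a ⟨ha, _, h'⟩; exact R'.irrefl h' } with hRdef
  have hle : R ≤ A := by rintro a b ⟨ha, hb, h'⟩; exact hR' h'
  rcases h R hle with hM | hT
  · left
    obtain ⟨p, hinj, hadj⟩ := hM
    have hmem : ∀ z : Fin k × Fin 2, p z ∈ s := by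
      rintro ⟨i, x⟩
      rcases (by decide : ∀ x : Fin 2, x = 0 ∨ x = 1) x with h0 | h1
      · subst h0; exact (hadj i).choose
      · subst h1; exact (hadj i).choose_spec.choose
    refine ⟨fun z => ⟨p z, hmem z⟩, fun a b hab => hinj (congrArg Subtype.val hab), fun i => ?_⟩
    obtain ⟨ha, hb, h'⟩ := hadj i
    exact h'
  · right
    obtain ⟨x, y, z, hxy, hxz, hyz, e1, e2, e3⟩ := hT
    have hx : x ∈ s := hs e1.1
    have hy : y ∈ s := hs e1.1.symm
    have hz : z ∈ s := hs e2.1.symm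
    refine ⟨⟨x, hx⟩, ⟨y, hy⟩, ⟨z, hz⟩, fun h => hxy (congrArg Subtype.val h),
      fun h => hxz (congrArg Subtype.val h), fun h => hyz (congrArg Subtype.val h),
      ⟨e1.1, fun hr => e1.2 ⟨hx, hy, hr⟩⟩, ⟨e2.1, fun hr => e2.2 ⟨hx, hz, hr⟩⟩,
      ⟨e3.1, fun hr => e3.2 ⟨hy, hz, hr⟩⟩⟩

def Kdel (G : SimpleGraph V) (v : V) : SimpleGraph V where
  Adj a b := G.Adj a b ∧ a ≠ v ∧ b ≠ v
  symm := ⟨fun a b h => ⟨h.1.symm, h.2.2, h.2.1⟩⟩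
  loopless := ⟨fun a h => G.irrefl h.1⟩

def KC (G : SimpleGraph V) (v : V) (c : (Kdel G v).ConnectedComponent) : SimpleGraph V where
  Adj a b := (Kdel G v).Adj a b ∧ (Kdel G v).connectedComponentMk a = c
  symm := ⟨fun a b h =>
    ⟨h.1.symm, (ConnectedComponent.connectedComponentMk_eq_of_adj h.1).symm.trans h.2⟩⟩
  loopless := ⟨fun a h => (Kdel G v).irrefl h.1⟩

variable (G : SimpleGraph V) (v : V)

lemma kc_le {c} : KC G v c ≤ Kdel G v := fun _ _ h => h.1

lemma kdel_le : Kdel G v ≤ G := fun _ _ h => h.1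

lemma kc_mk_fst {c a b} (h : (KC G v c).Adj a b) : (Kdel G v).connectedComponentMk a = c := h.2

lemma kc_mk_snd {c a b} (h : (KC G v c).Adj a b) : (Kdel G v).connectedComponentMk b = c :=
  (ConnectedComponent.connectedComponentMk_eq_of_adj h.1).symm.trans h.2

lemma kc_ne_fst {c a b} (h : (KC G v c).Adj a b) : a ≠ v := h.1.2.1
lemma kc_ne_snd {c a b} (h : (KC G v c).Adj a b) : b ≠ v := h.1.2.2

lemma mk_eq_self {u : V}
    (h : (Kdel G v).connectedComponentMk u = (Kdel G v).connectedComponentMk v) : u = v := by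
  obtain ⟨w⟩ := (ConnectedComponent.exact h).symm
  cases w with
  | nil => rfl
  | cons h' p => exact absurd rfl h'.2.1

lemma exists_anchor {u z : V} (w : G.Walk u z) :
    z = v → u ≠ v →
      ∃ x, G.Adj v x ∧
        (Kdel G v).connectedComponentMk x = (Kdel G v).connectedComponentMk u := by
  induction w with
  | nil => intro h1 h2; exact absurd h1 h2
  | @cons a b c h p ih =>
      intro hc ha
      by_cases hb : b = v
      · subst hb; exact ⟨a, h.symm, rfl⟩
      · obtain ⟨x, hx1, hx2⟩ := ih hc hb
        exact ⟨x, hx1, hx2.trans (ConnectedComponent.connectedComponentMk_eq_of_adj (show (Kdel G v).Adj a b from ⟨h, ha, hb⟩)).symm⟩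

lemma kc_walk {x y : V} (w : (Kdel G v).Walk x y) :
    (KC G v ((Kdel G v).connectedComponentMk x)).Reachable x y := by
  induction w with
  | nil => exact Reachable.refl _
  | @cons a b c h p ih =>
      refine (Adj.reachable (show (KC G v ((Kdel G v).connectedComponentMk a)).Adj a b from ⟨h, rfl⟩)).trans ?_
      rw [ConnectedComponent.connectedComponentMk_eq_of_adj h]
      exact ih

lemma kc_supp_reach {c} {x y : V} (hx : x ∈ c.supp) (hy : y ∈ c.supp) :
    (KC G v c).Reachable x y := by
  rw [ConnectedComponent.mem_supp_iff] at hx hy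
  obtain ⟨w⟩ := ConnectedComponent.exact (hx.trans hy.symm)
  have h2 := kc_walk G v w
  rwa [hx] at h2

lemma kc_support {c} ⦃x y : V⦄ (h : (KC G v c).Adj x y) : x ∈ c.supp := by
  rw [ConnectedComponent.mem_supp_iff]; exact h.2

section Counting

attribute [local instance] Classical.propDecidable

variable [Fintype V] (G : SimpleGraph V) (v : V)

noncomputable instance : Fintype (Kdel G v).ConnectedComponent :=
  @Fintype.ofFinite _ (Finite.of_surjective (Kdel G v).connectedComponentMk
    fun c => Quot.exists_rep c)

noncomputable def comps : Finset (Kdel G v).ConnectedComponent :=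
  Finset.univ.erase ((Kdel G v).connectedComponentMk v)

noncomputable def eCn (c : (Kdel G v).ConnectedComponent) : ℕ := (KC G v c).edgeFinset.card

noncomputable def bCn (c : (Kdel G v).ConnectedComponent) : ℕ := bArr (KC G v c)

noncomputable def dCn (c : (Kdel G v).ConnectedComponent) : ℕ :=
  ((G.neighborFinset v).filter fun u => (Kdel G v).connectedComponentMk u = c).card

lemma ncard_edgeSet (A : SimpleGraph V) : A.edgeSet.ncard = A.edgeFinset.card := by
  rw [← coe_edgeFinset, Set.ncard_coe_finset]

lemma filter_not_mem_eq_kdel :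
    (G.edgeFinset.filter fun e => ¬ v ∈ e) = (Kdel G v).edgeFinset := by
  ext e
  induction e with
  | _ a b =>
    simp only [Finset.mem_filter, mem_edgeFinset, mem_edgeSet, Sym2.mem_iff]
    push_neg
    constructor
    · rintro ⟨h1, h2, h3⟩; exact ⟨h1, h2.symm, h3.symm⟩
    · rintro ⟨h1, h2, h3⟩; exact ⟨h1, h2.symm, h3.symm⟩

lemma kdel_edge_biunion :
    (Kdel G v).edgeFinset = Finset.univ.biUnion (fun c => (KC G v c).edgeFinset) := by
  ext e
  induction e with
  | _ a b =>
    simp only [mem_edgeFinset, Finset.mem_biUnion, Finset.mem_univ, true_and, mem_edgeSet]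
    constructor
    · intro h; exact ⟨(Kdel G v).connectedComponentMk a, h, rfl⟩
    · rintro ⟨c, h⟩; exact h.1

lemma kc_edge_disjoint : ∀ c ∈ (Finset.univ : Finset (Kdel G v).ConnectedComponent),
    ∀ c' ∈ Finset.univ, c ≠ c' → Disjoint ((KC G v c).edgeFinset) ((KC G v c').edgeFinset) := by
  intro c _ c' _ hcc'
  rw [Finset.disjoint_left]
  intro e he he'
  induction e with
  | _ a b =>
    rw [mem_edgeFinset, mem_edgeSet] at he he'
    exact hcc' (he.2.symm.trans he'.2)

lemma eCn_cv : eCn G v ((Kdel G v).connectedComponentMk v) = 0 := by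
  rw [eCn, Finset.card_eq_zero]
  ext e
  induction e with
  | _ a b =>
    simp only [mem_edgeFinset, mem_edgeSet, Finset.notMem_empty, iff_false]
    intro h
    exact h.1.2.1 (mk_eq_self G v h.2)

lemma edge_split : G.edgeFinset.card = G.degree v + ∑ c ∈ comps G v, eCn G v c := by
  have h1 := Finset.card_filter_add_card_filter_not
    (s := G.edgeFinset) (p := fun e => v ∈ e)
  have h2 : (G.edgeFinset.filter fun e => v ∈ e) = G.incidenceFinset v :=
    (incidenceFinset_eq_filter G v).symm
  have h4 := kc_edge_disjoint G v
  have h5 : (Kdel G v).edgeFinset.card = ∑ c, (KC G v c).edgeFinset.card := by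
    rw [kdel_edge_biunion, Finset.card_biUnion h4]
  have h6 : ∑ c, (KC G v c).edgeFinset.card
      = eCn G v ((Kdel G v).connectedComponentMk v) + ∑ c ∈ comps G v, eCn G v c := by
    rw [comps, ← Finset.add_sum_erase _ _ (Finset.mem_univ _)]
    rfl
  rw [← h1, h2, card_incidenceFinset_eq_degree, filter_not_mem_eq_kdel, h5, h6, eCn_cv]
  omega

lemma sum_dCn : ∑ c ∈ comps G v, dCn G v c = G.degree v := by
  have h := Finset.card_eq_sum_card_fiberwise
    (f := fun u => (Kdel G v).connectedComponentMk u) (s := G.neighborFinset v)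
    (t := comps G v) ?_
  · exact h.symm
  · intro u hu
    show (Kdel G v).connectedComponentMk u ∈ comps G v
    rw [comps, Finset.mem_erase]
    refine ⟨fun hc => ?_, Finset.mem_univ _⟩
    exact (G.ne_of_adj ((mem_neighborFinset G v u).mp hu)).symm (mk_eq_self G v hc)

lemma one_le_dCn (hconn : G.Connected) {c} (hc : c ∈ comps G v) : 1 ≤ dCn G v c := by
  obtain ⟨u, hu⟩ := Quot.exists_rep c
  have huv : u ≠ v := by
    intro h
    subst h
    exact (Finset.mem_erase.mp hc).1 hu.symm
  obtain ⟨w⟩ := hconn.preconnected u v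
  obtain ⟨x, hx1, hx2⟩ := exists_anchor G v w rfl huv
  refine Finset.card_pos.mpr ⟨x, Finset.mem_filter.mpr
    ⟨(mem_neighborFinset G v x).mpr hx1, by rw [hx2]; exact hu⟩⟩

lemma comps_card_le (hconn : G.Connected) : (comps G v).card ≤ G.degree v := by
  rw [← sum_dCn G v]
  calc (comps G v).card = ∑ _c ∈ comps G v, 1 := by simp
  _ ≤ ∑ c ∈ comps G v, dCn G v c := Finset.sum_le_sum fun c hc => one_le_dCn G v hconn hc

def starC (c : (Kdel G v).ConnectedComponent) : SimpleGraph V :=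
  fromRel (fun a b => a = v ∧ G.Adj v b ∧ (Kdel G v).connectedComponentMk b = c)

lemma starC_adj {c : (Kdel G v).ConnectedComponent} {a b : V} :
    (starC G v c).Adj a b ↔
      ((a = v ∧ G.Adj v b ∧ (Kdel G v).connectedComponentMk b = c) ∨
        (b = v ∧ G.Adj v a ∧ (Kdel G v).connectedComponentMk a = c)) := by
  rw [starC, fromRel_adj]
  constructor
  · rintro ⟨_, h⟩; exact h
  · intro h
    refine ⟨?_, h⟩
    rcases h with ⟨h1, h2, _⟩ | ⟨h1, h2, _⟩
    · subst h1; exact h2.ne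
    · subst h1; exact h2.ne'

def KCplus (c : (Kdel G v).ConnectedComponent) : SimpleGraph V := KC G v c ⊔ starC G v c

lemma kcplus_nbr (c : (Kdel G v).ConnectedComponent) :
    (KCplus G v c).neighborFinset v =
      (G.neighborFinset v).filter (fun u => (Kdel G v).connectedComponentMk u = c) := by
  ext u
  rw [mem_neighborFinset, Finset.mem_filter, mem_neighborFinset]
  constructor
  · intro h
    rcases (sup_adj _ _ _ _).mp h with h | h
    · exact absurd rfl h.1.2.1
    · rcases (starC_adj G v).mp h with ⟨_, h2, h3⟩ | ⟨h1, h2, _⟩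
      · exact ⟨h2, h3⟩
      · exact absurd h2 (G.irrefl)
  · rintro ⟨h1, h2⟩
    exact (sup_adj _ _ _ _).mpr (Or.inr ((starC_adj G v).mpr (Or.inl ⟨rfl, h1, h2⟩)))

lemma kcplus_filter_eq_kc (c : (Kdel G v).ConnectedComponent) :
    ((KCplus G v c).edgeFinset.filter fun e => ¬ v ∈ e) = (KC G v c).edgeFinset := by
  ext e
  induction e with
  | _ a b =>
    simp only [Finset.mem_filter, mem_edgeFinset, mem_edgeSet, Sym2.mem_iff]
    push_neg
    constructor
    · rintro ⟨h1, h2, h3⟩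
      rcases (sup_adj _ _ _ _).mp h1 with h | h
      · exact h
      · rcases (starC_adj G v).mp h with ⟨h4, _⟩ | ⟨h4, _⟩
        · exact absurd h4.symm h2
        · exact absurd h4.symm h3
    · intro h
      exact ⟨(sup_adj _ _ _ _).mpr (Or.inl h), (kc_ne_fst G v h).symm.symm.symm,
        (kc_ne_snd G v h).symm.symm.symm⟩

lemma kcplus_edgecard (c : (Kdel G v).ConnectedComponent) :
    (KCplus G v c).edgeFinset.card = eCn G v c + dCn G v c := by
  have h1 := Finset.card_filter_add_card_filter_not
    (s := (KCplus G v c).edgeFinset) (p := fun e => v ∈ e)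
  have h2 : ((KCplus G v c).edgeFinset.filter fun e => v ∈ e)
      = (KCplus G v c).incidenceFinset v := (incidenceFinset_eq_filter _ v).symm
  have h3 := card_incidenceFinset_eq_degree (KCplus G v c) v
  have h4 : (KCplus G v c).degree v = dCn G v c := by
    rw [degree, kcplus_nbr]; rfl
  rw [← h1, h2, h3, h4, kcplus_filter_eq_kc]
  rw [eCn]; omega

lemma kcplus_support {c : (Kdel G v).ConnectedComponent} :
    ∀ ⦃x y⦄, (KCplus G v c).Adj x y → x ∈ (c.supp ∪ {v} : Set V) := by
  intro x y h
  rcases (sup_adj _ _ _ _).mp h with h | h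
  · exact Or.inl (kc_support G v h)
  · rcases (starC_adj G v).mp h with ⟨h1, _⟩ | ⟨_, _, h3⟩
    · exact Or.inr h1
    · exact Or.inl (c.mem_supp_iff x |>.mpr h3)

lemma kcplus_reach {c : (Kdel G v).ConnectedComponent}
    (ha : ∃ x, G.Adj v x ∧ (Kdel G v).connectedComponentMk x = c) :
    ∀ x ∈ (c.supp ∪ {v} : Set V), ∀ y ∈ (c.supp ∪ {v} : Set V),
      (KCplus G v c).Reachable x y := by
  obtain ⟨w, hw1, hw2⟩ := ha
  have hws : w ∈ c.supp := (c.mem_supp_iff w).mpr hw2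
  have hv : ∀ x ∈ c.supp, (KCplus G v c).Reachable v x := by
    intro x hx
    refine (Adj.reachable ?_).trans ((kc_supp_reach G v hws hx).mono le_sup_left)
    exact (sup_adj _ _ _ _).mpr (Or.inr ((starC_adj G v).mpr (Or.inl ⟨rfl, hw1, hw2⟩)))
  intro x hx y hy
  rcases hx with hx | hx <;> rcases hy with hy | hy
  · exact (kc_supp_reach G v hx hy).mono le_sup_left
  · rw [Set.mem_singleton_iff] at hy; subst hy; exact (hv x hx).symm
  · rw [Set.mem_singleton_iff] at hx; subst hx; exact hv y hy
  · rw [Set.mem_singleton_iff] at hx hy; subst hx; subst hy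
    exact Reachable.refl _

def Prob (c : (Kdel G v).ConnectedComponent) : Prop :=
  ∀ Rc : SimpleGraph V, Rc ≤ KC G v c → ¬HasM Rc (bCn G v c + 1) →
    ¬HasT (KC G v c \ Rc) →
    ∃ x y : V, (KC G v c \ Rc).Adj x y ∧ G.Adj v x ∧ G.Adj v y

lemma prob_arr {c : (Kdel G v).ConnectedComponent} (h3 : dCn G v c ≤ 3)
    (hp : Prob G v c) : Arr (KCplus G v c) (bCn G v c + 1) := by
  intro R hR
  by_cases hT : HasT (KCplus G v c \ R)
  · exact Or.inr hT
  left
  set k := bCn G v c + 1 with hk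
  set R0 : SimpleGraph V :=
    { Adj := fun a b => R.Adj a b ∧ a ≠ v ∧ b ≠ v
      symm := by constructor; rintro a b ⟨h1, h2, h3⟩; exact ⟨h1.symm, h3, h2⟩
      loopless := by constructor; rintro a ⟨h1, _, _⟩; exact R.irrefl h1 } with hR0
  set Fg : SimpleGraph V :=
    { Adj := fun a b => (KC G v c).Adj a b ∧ G.Adj v a ∧ G.Adj v b ∧ ¬ R.Adj a b
      symm := by constructor; rintro a b ⟨h1, h2, h3, h4⟩; exact ⟨h1.symm, h3, h2, fun hr => h4 hr.symm⟩
      loopless := by constructor; rintro a ⟨h1, _⟩; exact (KC G v c).irrefl h1 } with hFg0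
  have hA'KC : ∀ ⦃a b⦄, (KCplus G v c).Adj a b → a ≠ v → b ≠ v → (KC G v c).Adj a b := by
    intro a b h ha hb
    rcases (sup_adj _ _ _ _).mp h with h | h
    · exact h
    · rcases (starC_adj G v).mp h with ⟨h1, _⟩ | ⟨h1, _⟩
      · exact absurd h1 ha
      · exact absurd h1 hb
  have hle1 : R0 ⊔ Fg ≤ KC G v c := by
    intro a b h
    rcases (sup_adj _ _ _ _).mp h with h | h
    · exact hA'KC (hR h.1) h.2.1 h.2.2
    · exact h.1
  by_cases hM : HasM (R0 ⊔ Fg) k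
  · obtain ⟨p, hinj, hadj⟩ := hM
    have hKCadj : ∀ i : Fin k, (KC G v c).Adj (p (i, 0)) (p (i, 1)) := fun i => hle1 (hadj i)
    have hpv : ∀ z : Fin k × Fin 2, p z ≠ v := by
      rintro ⟨i, a⟩
      rcases (by decide : ∀ x : Fin 2, x = 0 ∨ x = 1) a with h | h <;> subst h
      · exact kc_ne_fst G v (hKCadj i)
      · exact kc_ne_snd G v (hKCadj i)
    set bad := Finset.univ.filter (fun i : Fin k => ¬ R.Adj (p (i, 0)) (p (i, 1))) with hbad
    have hFgadj : ∀ i ∈ bad, Fg.Adj (p (i, 0)) (p (i, 1)) := by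
      intro i hi
      have hbadi := (Finset.mem_filter.mp hi).2
      rcases (sup_adj _ _ _ _).mp (hadj i) with h | h
      · exact absurd h.1 hbadi
      · exact h
    have hbadcard : bad.card ≤ 1 := by
      by_contra hbc
      obtain ⟨i, hi, j, hj, hij⟩ := Finset.one_lt_card.mp (show 1 < bad.card by omega)
      have hmemN : ∀ i ∈ bad, ∀ a : Fin 2,
          p (i, a) ∈ (G.neighborFinset v).filter
            (fun u => (Kdel G v).connectedComponentMk u = c) := by
        intro i hi a
        have hF := hFgadj i hi
        rcases (by decide : ∀ x : Fin 2, x = 0 ∨ x = 1) a with h | h <;> subst h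
        · exact Finset.mem_filter.mpr
            ⟨(mem_neighborFinset G v _).mpr hF.2.1, kc_mk_fst G v hF.1⟩
        · exact Finset.mem_filter.mpr
            ⟨(mem_neighborFinset G v _).mpr hF.2.2.1, kc_mk_snd G v hF.1⟩
      have d1 : p (i, 0) ≠ p (i, 1) :=
        fun h => (by decide : ¬ (0 : Fin 2) = 1) (congrArg Prod.snd (hinj h))
      have d2 : p (i, 0) ≠ p (j, 0) := fun h => hij (congrArg Prod.fst (hinj h))
      have d3 : p (i, 0) ≠ p (j, 1) := fun h => hij (congrArg Prod.fst (hinj h))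
      have d4 : p (i, 1) ≠ p (j, 0) := fun h => hij (congrArg Prod.fst (hinj h))
      have d5 : p (i, 1) ≠ p (j, 1) := fun h => hij (congrArg Prod.fst (hinj h))
      have d6 : p (j, 0) ≠ p (j, 1) :=
        fun h => (by decide : ¬ (0 : Fin 2) = 1) (congrArg Prod.snd (hinj h))
      have h4 : ({p (i, 0), p (i, 1), p (j, 0), p (j, 1)} : Finset V).card = 4 := by
        rw [Finset.card_insert_of_notMem (by simp [d1, d2, d3]),
          Finset.card_insert_of_notMem (by simp [d4, d5]),
          Finset.card_insert_of_notMem (by simp [d6]), Finset.card_singleton]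
      have hsub : ({p (i, 0), p (i, 1), p (j, 0), p (j, 1)} : Finset V) ⊆
          (G.neighborFinset v).filter
            (fun u => (Kdel G v).connectedComponentMk u = c) := by
        intro x hx
        simp only [Finset.mem_insert, Finset.mem_singleton] at hx
        rcases hx with h | h | h | h <;> subst h
        · exact hmemN i hi 0
        · exact hmemN i hi 1
        · exact hmemN j hj 0
        · exact hmemN j hj 1
      have hle4 := Finset.card_le_card hsub
      rw [h4] at hle4
      have hd4 : 4 ≤ dCn G v c := hle4
      omega
    by_cases hbe : bad = ∅
    · refine ⟨p, hinj, fun i => ?_⟩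
      by_contra hcon
      have hmem : i ∈ bad := Finset.mem_filter.mpr ⟨Finset.mem_univ _, hcon⟩
      rw [hbe] at hmem
      exact absurd hmem (Finset.notMem_empty _)
    · obtain ⟨i₀, hi₀⟩ := Finset.nonempty_of_ne_empty hbe
      have honly : ∀ j : Fin k, j ≠ i₀ → R.Adj (p (j, 0)) (p (j, 1)) := by
        intro j hj
        by_contra hcon
        exact hj (Finset.card_le_one.mp hbadcard j
          (Finset.mem_filter.mpr ⟨Finset.mem_univ _, hcon⟩) i₀ hi₀)
      have hF := hFgadj i₀ hi₀
      have hxyb : (KCplus G v c \ R).Adj (p (i₀, 0)) (p (i₀, 1)) :=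
        ⟨(sup_adj _ _ _ _).mpr (Or.inl hF.1), hF.2.2.2⟩
      have hvx : (KCplus G v c).Adj v (p (i₀, 0)) :=
        (sup_adj _ _ _ _).mpr (Or.inr ((starC_adj G v).mpr
          (Or.inl ⟨rfl, hF.2.1, kc_mk_fst G v hF.1⟩)))
      have hvy : (KCplus G v c).Adj v (p (i₀, 1)) :=
        (sup_adj _ _ _ _).mpr (Or.inr ((starC_adj G v).mpr
          (Or.inl ⟨rfl, hF.2.2.1, kc_mk_snd G v hF.1⟩)))
      have d1 : p (i₀, 0) ≠ p (i₀, 1) :=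
        fun h => (by decide : ¬ (0 : Fin 2) = 1) (congrArg Prod.snd (hinj h))
      have hred : R.Adj v (p (i₀, 0)) ∨ R.Adj v (p (i₀, 1)) := by
        by_contra hcon
        push_neg at hcon
        exact hT ⟨v, p (i₀, 0), p (i₀, 1), (hpv (i₀, 0)).symm, (hpv (i₀, 1)).symm, d1,
          ⟨hvx, hcon.1⟩, ⟨hvy, hcon.2⟩, hxyb⟩
      have hbuild : ∀ a : Fin 2, R.Adj v (p (i₀, a)) → HasM R k := by
        intro a ha
        refine ⟨fun z => if z = (i₀, 0) then v else if z = (i₀, 1) then p (i₀, a) else p z,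
          ?_, ?_⟩
        · intro z1 z2 hqe
          dsimp only at hqe
          by_cases h1 : z1 = (i₀, 0)
          · rw [if_pos h1] at hqe
            by_cases h3 : z2 = (i₀, 0)
            · exact h1.trans h3.symm
            · rw [if_neg h3] at hqe
              by_cases h4 : z2 = (i₀, 1)
              · rw [if_pos h4] at hqe; exact absurd hqe.symm (hpv _)
              · rw [if_neg h4] at hqe; exact absurd hqe.symm (hpv _)
          · rw [if_neg h1] at hqe
            by_cases h2 : z1 = (i₀, 1)
            · rw [if_pos h2] at hqe
              by_cases h3 : z2 = (i₀, 0)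
              · rw [if_pos h3] at hqe; exact absurd hqe (hpv _)
              · rw [if_neg h3] at hqe
                by_cases h4 : z2 = (i₀, 1)
                · rw [if_pos h4] at hqe; exact h2.trans h4.symm
                · rw [if_neg h4] at hqe
                  exfalso
                  have hz2 := (hinj hqe).symm
                  rcases (by decide : ∀ x : Fin 2, x = 0 ∨ x = 1) a with h | h <;> subst h
                  · exact h3 hz2
                  · exact h4 hz2
            · rw [if_neg h2] at hqe
              by_cases h3 : z2 = (i₀, 0)
              · rw [if_pos h3] at hqe; exact absurd hqe (hpv _)
              · rw [if_neg h3] at hqe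
                by_cases h4 : z2 = (i₀, 1)
                · rw [if_pos h4] at hqe
                  exfalso
                  have hz1 := hinj hqe
                  rcases (by decide : ∀ x : Fin 2, x = 0 ∨ x = 1) a with h | h <;> subst h
                  · exact h1 hz1
                  · exact h2 hz1
                · rw [if_neg h4] at hqe; exact hinj hqe
        · intro i
          by_cases hi : i = i₀
          · subst hi
            dsimp only
            rw [if_pos rfl, if_neg (fun h => (by decide : ¬ (1 : Fin 2) = 0)
              (congrArg Prod.snd h)), if_pos rfl]
            exact ha
          · dsimp only
            rw [if_neg (fun h : (i, (0:Fin 2)) = (i₀, 0) => hi (congrArg Prod.fst h)),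
              if_neg (fun h : (i, (0:Fin 2)) = (i₀, 1) => hi (congrArg Prod.fst h)),
              if_neg (fun h : (i, (1:Fin 2)) = (i₀, 0) => hi (congrArg Prod.fst h)),
              if_neg (fun h : (i, (1:Fin 2)) = (i₀, 1) => hi (congrArg Prod.fst h))]
            exact honly i hi
      rcases hred with h | h
      · exact hbuild 0 h
      · exact hbuild 1 h
  · exfalso
    have hT1 : ¬HasT (KC G v c \ (R0 ⊔ Fg)) := by
      rintro ⟨x, y, z, h1, h2, h3, e1, e2, e3⟩
      have lift : ∀ ⦃a b⦄, (KC G v c \ (R0 ⊔ Fg)).Adj a b → (KCplus G v c \ R).Adj a b := by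
        intro a b h
        refine ⟨(sup_adj _ _ _ _).mpr (Or.inl h.1), fun hr => h.2 ?_⟩
        exact (sup_adj _ _ _ _).mpr (Or.inl ⟨hr, kc_ne_fst G v h.1, kc_ne_snd G v h.1⟩)
      exact hT ⟨x, y, z, h1, h2, h3, lift e1, lift e2, lift e3⟩
    obtain ⟨x, y, hblue, hvx, hvy⟩ := hp (R0 ⊔ Fg) hle1 hM hT1
    have : Fg.Adj x y := by
      refine ⟨hblue.1, hvx, hvy, fun hr => hblue.2 ?_⟩
      exact (sup_adj _ _ _ _).mpr (Or.inl ⟨hr, kc_ne_fst G v hblue.1, kc_ne_snd G v hblue.1⟩)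
    exact hblue.2 ((sup_adj _ _ _ _).mpr (Or.inr this))

end Counting

end Stmt16

open Stmt16

/-- Under the minimality hypotheses, the maximum degree of `G` is at most
three. -/
theorem max_degree_le_three (n : ℕ) (hn : 0 < n) (V : Type) [Finite V]
    (G : SimpleGraph V) (hconn : G.Connected) (hE : G.edgeSet.ncard ≤ 4 * n - 2)
    (harrow : Arrows G (Matching n) (cycleGraph 3))
    (hmin : ∀ k : ℕ, 0 < k → ∀ (W : Type), Finite W → ∀ H : SimpleGraph W,
      H.Connected →
      (Nat.card W < Nat.card V ∨
        (Nat.card W = Nat.card V ∧ H.edgeSet.ncard < G.edgeSet.ncard)) →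
      H.edgeSet.ncard ≤ 4 * k - 2 →
      ¬ Arrows H (Matching k) (cycleGraph 3)) :
    ∀ v : V, (G.neighborSet v).ncard ≤ 3 := by
  classical
  haveI : Fintype V := Fintype.ofFinite V
  intro v
  by_contra hv
  push_neg at hv
  have hdeg : (G.neighborSet v).ncard = G.degree v := by
    rw [← Nat.card_coe_set_eq, Nat.card_eq_fintype_card, card_neighborSet_eq_degree]
  have hd4 : 4 ≤ G.degree v := by omega
  have hG : Arr G n := arr_iff.mp harrow
  -- the minimality principle, packaged
  have key : ∀ (A : SimpleGraph V) (s : Set V), (∀ ⦃x y⦄, A.Adj x y → x ∈ s) →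
      s.Nonempty → (∀ x ∈ s, ∀ y ∈ s, A.Reachable x y) → s ≠ Set.univ →
      ∀ k : ℕ, 0 < k → Arr A k → 4 * k ≤ A.edgeFinset.card + 1 := by
    intro A s hsup hne hreach hproper k hk hArr
    by_contra hcon
    push_neg at hcon
    have hsize : Nat.card ↥s < Nat.card V := by
      rw [Nat.card_coe_set_eq, ← Set.ncard_univ]
      exact Set.ncard_lt_ncard (Set.ssubset_univ_iff.mpr hproper) Set.finite_univ
    have hedge : (A.comap (Subtype.val : ↥s → V)).edgeSet.ncard ≤ 4 * k - 2 := by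
      rw [comap_edge_ncard hsup, ncard_edgeSet]
      omega
    exact hmin k hk ↥s inferInstance _ (comap_connected hsup hne hreach)
      (Or.inl hsize) hedge (arrows_comap hsup hArr)
  -- F4 : components with positive level have many edges
  have hF4 : ∀ c ∈ comps G v, 1 ≤ bCn G v c →
      4 * bCn G v c ≤ eCn G v c + 1 := by
    intro c hc hb
    obtain ⟨u, hu⟩ := Quot.exists_rep c
    have hne : (c.supp : Set V).Nonempty := ⟨u, (c.mem_supp_iff u).mpr hu⟩
    have hproper : (c.supp : Set V) ≠ Set.univ := by
      intro h
      have hvm : v ∈ c.supp := h ▸ Set.mem_univ v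
      rw [c.mem_supp_iff] at hvm
      exact (Finset.mem_erase.mp hc).1 hvm.symm
    exact key _ _ (kc_support G v) hne
      (fun x hx y hy => kc_supp_reach G v hx hy) hproper _ hb (bArr_spec _)
  -- choice of extremal colourings for each component
  have hchoice : ∀ c : (Kdel G v).ConnectedComponent,
      ∃ Rc : SimpleGraph V, Rc ≤ KC G v c ∧ ¬HasM Rc (bCn G v c + 1) ∧
        ¬HasT (KC G v c \ Rc) := by
    intro c
    have h := bArr_lt (KC G v c)
    rw [Arr] at h
    push_neg at h
    obtain ⟨R, hR1, hR2, hR3⟩ := h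
    exact ⟨R, hR1, hR2, hR3⟩
  choose Rb hRb1 hRb2 hRb3 using hchoice
  -- splitting matchings among components
  have hsplit : ∀ (S : (Kdel G v).ConnectedComponent → SimpleGraph V),
      (∀ c, S c ≤ KC G v c) →
      (∀ c, ¬HasM (S c) (bCn G v c + 1)) →
      ∀ {k : ℕ} (p : Fin k × Fin 2 → V), Function.Injective p →
      ∀ I : Finset (Fin k),
        (∀ i ∈ I, (S ((Kdel G v).connectedComponentMk (p (i, 0)))).Adj (p (i, 0)) (p (i, 1))) →
      I.card ≤ ∑ c ∈ comps G v, bCn G v c := by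
    intro S hle hnM k p hinj I hadj
    have hmemc : ∀ i ∈ I, (Kdel G v).connectedComponentMk (p (i, 0)) ∈ comps G v := by
      intro i hi
      rw [comps, Finset.mem_erase]
      exact ⟨fun hc => kc_ne_fst G v (hle _ (hadj i hi)) (mk_eq_self G v hc),
        Finset.mem_univ _⟩
    rw [Finset.card_eq_sum_card_fiberwise (fun i hi => hmemc i hi)]
    refine Finset.sum_le_sum fun c hc => ?_
    by_contra hgt
    push_neg at hgt
    refine hnM c (HasM.mono (hasM_of_finset hinj
      (I.filter fun i => (Kdel G v).connectedComponentMk (p (i, 0)) = c) ?_) (by omega))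
    intro j hj
    obtain ⟨hjI, hjc⟩ := Finset.mem_filter.mp hj
    have h := hadj j hjI
    rwa [hjc] at h
  -- F3 : the sum of levels is at least n-1
  have hS1 : n ≤ (∑ c ∈ comps G v, bCn G v c) + 1 := by
    set R1 : SimpleGraph V := SimpleGraph.fromRel
      (fun a b => (G.Adj a b ∧ (a = v ∨ b = v)) ∨
        (Rb ((Kdel G v).connectedComponentMk a)).Adj a b) with hR1def
    have hstar : ∀ a b, G.Adj a b → (a = v ∨ b = v) → R1.Adj a b := by
      intro a b h1 h2
      rw [hR1def, fromRel_adj]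
      exact ⟨h1.ne, Or.inl (Or.inl ⟨h1, h2⟩)⟩
    have hR1cases : ∀ ⦃a b⦄, R1.Adj a b → (G.Adj a b ∧ (a = v ∨ b = v)) ∨
        (Rb ((Kdel G v).connectedComponentMk a)).Adj a b := by
      intro a b h
      rw [hR1def, fromRel_adj] at h
      rcases h.2 with h' | h'
      · exact h'
      · rcases h' with ⟨h1, h2⟩ | h2
        · exact Or.inl ⟨h1.symm, h2.symm⟩
        · have hK := kc_le G v (hRb1 _ h2)
          have hmk : (Kdel G v).connectedComponentMk a
              = (Kdel G v).connectedComponentMk b :=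
            (ConnectedComponent.connectedComponentMk_eq_of_adj hK).symm
          right
          rw [hmk]
          exact h2.symm
    have hR1le : R1 ≤ G := by
      intro a b h
      rcases hR1cases h with ⟨h1, _⟩ | h1
      · exact h1
      · exact kdel_le G v (kc_le G v (hRb1 _ h1))
    rcases hG R1 hR1le with hM | hT
    · obtain ⟨p, hinj, hadj⟩ := hM
      set I := Finset.univ.filter (fun i : Fin n => p (i, 0) ≠ v ∧ p (i, 1) ≠ v) with hI
      have hIadj : ∀ i ∈ I,
          (Rb ((Kdel G v).connectedComponentMk (p (i, 0)))).Adj (p (i, 0)) (p (i, 1)) := by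
        intro i hi
        have hiv := (Finset.mem_filter.mp hi).2
        rcases hR1cases (hadj i) with ⟨_, h2⟩ | h2
        · rcases h2 with h2 | h2
          · exact absurd h2 hiv.1
          · exact absurd h2 hiv.2
        · exact h2
      have hIb := hsplit Rb hRb1 hRb2 p hinj I hIadj
      have hex : ∀ i ∈ Finset.univ \ I, ∃ a : Fin 2, p (i, a) = v := by
        intro i hi
        rw [Finset.mem_sdiff, hI, Finset.mem_filter] at hi
        by_cases h0 : p (i, 0) = v
        · exact ⟨0, h0⟩
        by_cases h1 : p (i, 1) = v
        · exact ⟨1, h1⟩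
        exact absurd ⟨Finset.mem_univ _, h0, h1⟩ hi.2
      have hcompl : (Finset.univ \ I).card ≤ 1 := by
        refine Finset.card_le_one.mpr fun i hi j hj => ?_
        obtain ⟨a, ha⟩ := hex i hi
        obtain ⟨b, hb⟩ := hex j hj
        exact congrArg Prod.fst (hinj (ha.trans hb.symm))
      have h1 : (Finset.univ \ I).card = n - I.card := by
        rw [Finset.card_sdiff_of_subset (Finset.subset_univ I), Finset.card_univ, Fintype.card_fin]
      have h2 : I.card ≤ n := by simpa using Finset.card_le_univ I
      omega
    · exfalso
      obtain ⟨x, y, z, hxy, hxz, hyz, e1, e2, e3⟩ := hT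
      have hnv : ∀ ⦃a b⦄, (G \ R1).Adj a b → a ≠ v := by
        intro a b h hav
        exact h.2 (hstar a b h.1 (Or.inl hav))
      have hx := hnv e1
      have hy := hnv e1.symm
      have hz := hnv e2.symm
      have hKxy : (Kdel G v).Adj x y := ⟨e1.1, hx, hy⟩
      have hKxz : (Kdel G v).Adj x z := ⟨e2.1, hx, hz⟩
      have hKyz : (Kdel G v).Adj y z := ⟨e3.1, hy, hz⟩
      have hmky : (Kdel G v).connectedComponentMk y
          = (Kdel G v).connectedComponentMk x :=
        (ConnectedComponent.connectedComponentMk_eq_of_adj hKxy).symm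
      have hnr : ∀ ⦃a b⦄, (G \ R1).Adj a b →
          ¬ (Rb ((Kdel G v).connectedComponentMk a)).Adj a b := by
        intro a b h hr
        refine h.2 ?_
        rw [hR1def, fromRel_adj]
        exact ⟨h.1.ne, Or.inl (Or.inr hr)⟩
      refine hRb3 ((Kdel G v).connectedComponentMk x)
        ⟨x, y, z, hxy, hxz, hyz, ⟨⟨hKxy, rfl⟩, hnr e1⟩, ⟨⟨hKxz, rfl⟩, hnr e2⟩,
          ⟨⟨hKyz, hmky⟩, ?_⟩⟩
      have h := hnr e3
      rwa [hmky] at h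
  -- global counting facts
  have hEeq := edge_split G v
  have hEn : G.edgeSet.ncard = G.edgeFinset.card := ncard_edgeSet G
  have hE2 : G.edgeFinset.card + 2 ≤ 4 * n := by omega
  have hcount : 4 * (∑ c ∈ comps G v, bCn G v c)
      ≤ (∑ c ∈ comps G v, eCn G v c)
        + ((comps G v).filter fun c => 1 ≤ bCn G v c).card := by
    rw [Finset.mul_sum, Finset.card_filter]
    rw [← Finset.sum_add_distrib]
    refine Finset.sum_le_sum fun c hc => ?_
    by_cases hb : 1 ≤ bCn G v c
    · rw [if_pos hb]
      exact hF4 c hc hb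
    · rw [if_neg hb]
      omega
  have htm : ((comps G v).filter fun c => 1 ≤ bCn G v c).card ≤ (comps G v).card :=
    Finset.card_filter_le _ _
  have hmle : (comps G v).card ≤ G.degree v := comps_card_le G v hconn
  have hdt : G.degree v ≤ ((comps G v).filter fun c => 1 ≤ bCn G v c).card + 2 := by omega
  by_cases hprob : ∃ c ∈ comps G v, Prob G v c
  · obtain ⟨c₀, hc₀, hp₀⟩ := hprob
    have hm1 : 1 ≤ (comps G v).card := Finset.card_pos.mpr ⟨c₀, hc₀⟩
    have hsum_d := sum_dCn G v
    have herase_d : ∑ c ∈ (comps G v).erase c₀, dCn G v c + dCn G v c₀ = G.degree v := by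
      rw [Finset.sum_erase_add _ _ hc₀]
      exact hsum_d
    have hcard_erase : ((comps G v).erase c₀).card = (comps G v).card - 1 :=
      Finset.card_erase_of_mem hc₀
    have herase_ge : (comps G v).card - 1 ≤ ∑ c ∈ (comps G v).erase c₀, dCn G v c := by
      rw [← hcard_erase]
      calc ((comps G v).erase c₀).card = ∑ _c ∈ (comps G v).erase c₀, 1 := by simp
      _ ≤ ∑ c ∈ (comps G v).erase c₀, dCn G v c :=
        Finset.sum_le_sum fun c hc => one_le_dCn G v hconn (Finset.mem_of_mem_erase hc)
    have hd3 : dCn G v c₀ ≤ 3 := by omega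
    have harr := prob_arr G v hd3 hp₀
    obtain ⟨c₁, hc₁m, hc₁⟩ := Finset.exists_mem_ne (show 1 < (comps G v).card by omega) c₀
    obtain ⟨u₁, hu₁'⟩ := Quot.exists_rep c₁
    have hu₁ : (Kdel G v).connectedComponentMk u₁ = c₁ := hu₁'
    have hu₁v : u₁ ≠ v := by
      intro h
      refine (Finset.mem_erase.mp hc₁m).1 ?_
      rw [← hu₁, h]
    have hproper : (c₀.supp ∪ {v} : Set V) ≠ Set.univ := by
      intro h
      have hu : u₁ ∈ (c₀.supp ∪ {v} : Set V) := h ▸ Set.mem_univ u₁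
      rcases hu with hu | hu
      · rw [ConnectedComponent.mem_supp_iff] at hu
        rw [hu₁] at hu
        exact hc₁ hu
      · exact hu₁v hu
    have hanchor : ∃ x, G.Adj v x ∧ (Kdel G v).connectedComponentMk x = c₀ := by
      have h := one_le_dCn G v hconn hc₀
      rw [dCn] at h
      obtain ⟨x, hx⟩ := Finset.card_pos.mp h
      obtain ⟨hx1, hx2⟩ := Finset.mem_filter.mp hx
      exact ⟨x, (mem_neighborFinset G v x).mp hx1, hx2⟩
    have hkey := key (KCplus G v c₀) (c₀.supp ∪ {v}) (kcplus_support G v)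
      ⟨v, Or.inr rfl⟩ (kcplus_reach G v hanchor) hproper
      (bCn G v c₀ + 1) (Nat.succ_pos _) harr
    rw [kcplus_edgecard] at hkey
    have hsE : ∑ c ∈ (comps G v).erase c₀, eCn G v c + eCn G v c₀
        = ∑ c ∈ comps G v, eCn G v c := Finset.sum_erase_add _ _ hc₀
    have hsB : ∑ c ∈ (comps G v).erase c₀, bCn G v c + bCn G v c₀
        = ∑ c ∈ comps G v, bCn G v c := Finset.sum_erase_add _ _ hc₀
    have hcount' : 4 * (∑ c ∈ (comps G v).erase c₀, bCn G v c)
        ≤ (∑ c ∈ (comps G v).erase c₀, eCn G v c)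
          + (((comps G v).erase c₀).filter fun c => 1 ≤ bCn G v c).card := by
      rw [Finset.mul_sum, Finset.card_filter, ← Finset.sum_add_distrib]
      refine Finset.sum_le_sum fun c hc => ?_
      by_cases hb : 1 ≤ bCn G v c
      · rw [if_pos hb]
        exact hF4 c (Finset.mem_of_mem_erase hc) hb
      · rw [if_neg hb]
        omega
    have ht'le : (((comps G v).erase c₀).filter fun c => 1 ≤ bCn G v c).card
        ≤ (comps G v).card - 1 := by
      rw [← hcard_erase]
      exact Finset.card_filter_le _ _
    omega
  · push_neg at hprob
    have hchoice2 : ∀ c : (Kdel G v).ConnectedComponent,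
        ∃ Rc : SimpleGraph V, Rc ≤ KC G v c ∧ ¬HasM Rc (bCn G v c + 1) ∧
          ¬HasT (KC G v c \ Rc) ∧
          ∀ x y : V, (KC G v c \ Rc).Adj x y → G.Adj v x → ¬ G.Adj v y := by
      intro c
      by_cases hc : c ∈ comps G v
      · have h := hprob c hc
        rw [Prob] at h
        push_neg at h
        obtain ⟨R, h1, h2, h3, h4⟩ := h
        refine ⟨R, h1, h2, h3, fun x y hb hx hy => ?_⟩
        have := h4 x y
        tauto
      · have hccv : c = (Kdel G v).connectedComponentMk v := by
          by_contra hne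
          exact hc (Finset.mem_erase.mpr ⟨hne, Finset.mem_univ _⟩)
        have hzero : ∀ a b : V, ¬ (KC G v c).Adj a b := by
          intro a b h
          refine kc_ne_fst G v h ?_
          refine mk_eq_self G v ?_
          rw [← hccv]
          exact h.2
        refine ⟨⊥, bot_le, ?_, ?_, ?_⟩
        · rintro ⟨p, hinj, hadj⟩
          have h := hadj ⟨0, Nat.succ_pos _⟩
          simp at h
        · rintro ⟨x, y, z, _, _, _, e1, _, _⟩
          exact hzero x y e1.1
        · intro x y hb _ _
          exact hzero x y hb.1
    choose Rb' h1' h2' h3' h4' using hchoice2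
    have hS2 : n ≤ ∑ c ∈ comps G v, bCn G v c := by
      set R2 : SimpleGraph V := SimpleGraph.fromRel
        (fun a b => (Rb' ((Kdel G v).connectedComponentMk a)).Adj a b) with hR2def
      have hR2cases : ∀ ⦃a b⦄, R2.Adj a b →
          (Rb' ((Kdel G v).connectedComponentMk a)).Adj a b := by
        intro a b h
        rw [hR2def, fromRel_adj] at h
        rcases h.2 with h' | h'
        · exact h'
        · have hK := kc_le G v (h1' _ h')
          have hmk : (Kdel G v).connectedComponentMk a
              = (Kdel G v).connectedComponentMk b :=
            (ConnectedComponent.connectedComponentMk_eq_of_adj hK).symm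
          rw [hmk]
          exact h'.symm
      have hR2le : R2 ≤ G := fun a b h => kdel_le G v (kc_le G v (h1' _ (hR2cases h)))
      rcases hG R2 hR2le with hM | hT
      · obtain ⟨p, hinj, hadj⟩ := hM
        have h := hsplit Rb' h1' h2' p hinj Finset.univ
          (fun i _ => hR2cases (hadj i))
        rwa [Finset.card_univ, Fintype.card_fin] at h
      · exfalso
        obtain ⟨x, y, z, hxy, hxz, hyz, e1, e2, e3⟩ := hT
        have hblue : ∀ ⦃a b⦄, (G \ R2).Adj a b → a ≠ v → b ≠ v →
            G.Adj v a → G.Adj v b → False := by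
          intro a b h ha hb hva hvb
          have hK : (Kdel G v).Adj a b := ⟨h.1, ha, hb⟩
          refine h4' ((Kdel G v).connectedComponentMk a) a b
            ⟨⟨hK, rfl⟩, fun hr => h.2 ?_⟩ hva hvb
          rw [hR2def, fromRel_adj]
          exact ⟨h.1.ne, Or.inl hr⟩
        by_cases hxv : x = v
        · subst hxv
          exact hblue e3 hxy.symm hxz.symm e1.1 e2.1
        by_cases hyv : y = v
        · subst hyv
          exact hblue e2 hxy e3.1.ne' e1.symm.1 e3.1
        by_cases hzv : z = v
        · subst hzv
          exact hblue e1 hxz hyz e2.symm.1 e3.symm.1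
        have hKxy : (Kdel G v).Adj x y := ⟨e1.1, hxv, hyv⟩
        have hKxz : (Kdel G v).Adj x z := ⟨e2.1, hxv, hzv⟩
        have hKyz : (Kdel G v).Adj y z := ⟨e3.1, hyv, hzv⟩
        have hmky : (Kdel G v).connectedComponentMk y
            = (Kdel G v).connectedComponentMk x :=
          (ConnectedComponent.connectedComponentMk_eq_of_adj hKxy).symm
        have hnr : ∀ ⦃a b⦄, (G \ R2).Adj a b →
            ¬ (Rb' ((Kdel G v).connectedComponentMk a)).Adj a b := by
          intro a b h hr
          refine h.2 ?_
          rw [hR2def, fromRel_adj]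
          exact ⟨h.1.ne, Or.inl hr⟩
        refine h3' ((Kdel G v).connectedComponentMk x)
          ⟨x, y, z, hxy, hxz, hyz, ⟨⟨hKxy, rfl⟩, hnr e1⟩, ⟨⟨hKxz, rfl⟩, hnr e2⟩,
            ⟨⟨hKyz, hmky⟩, ?_⟩⟩
        have h := hnr e3
        rwa [hmky] at h
    omega
end
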